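/- Assume that the directions within each of the two lists commute pointwise, i.e. for every u, i_l(u)·i_k(u) = i_k(u)·i_l(u) whenever l, k ≤ μ and whenever l, k > μ (cross commutativity between the lists is not required), and that each ρ_l(x,u) is linear in x. Let C, B : ℝ^m → 𝔸 be Bochner integrable and A = C⋆B. Then for every u ∈ ℝ^m: F_{F_1,F_2}(A)(u) = Σ_{j′∈{0,1}^μ} Σ_{k′∈{0,1}^{ν−μ}} (F_{F_1,F_2(k′)}(C)(u))_{c^{j′}(F_1)} · F_{F_1(j′),F_2}(B_{c^{k′}(F_2)})(u), and also F_{F_1,F_2}(A)(u) = Σ_{j′∈{0,1}^μ} Σ_{k′∈{0,1}^{ν−μ}} F_{F_1,F_2(k′)}(C_{c^{j′}(F_1)})(u) · (F_{F_1(j′),F_2}(B)(u))_{c^{k′}(F_2)}. -/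

import Mathlib

noncomputable section
open MeasureTheory

variable {𝔸 : Type*} [NormedRing 𝔸] [NormedAlgebra ℝ 𝔸] [CompleteSpace 𝔸]

/-- The commutative (`s = 0`) and anticommutative (`s = 1`) part of `A` with respect to an
invertible element `E`: `A_{c^s(E)} = ½(A + (−1)^s E⁻¹AE)`. -/
def cPart (E : 𝔸) (s : Fin 2) (A : 𝔸) : 𝔸 :=
  (2 : ℝ)⁻¹ • (A + (-1 : 𝔸) ^ (s : ℕ) * (Ring.inverse E * A * E))

/-- The iterated decomposition of `A` with respect to a list of invertible elements
with attached multi-index bits. -/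
def cIter (L : List (𝔸 × Fin 2)) (A : 𝔸) : 𝔸 :=
  L.foldl (fun acc p => cPart p.1 p.2 acc) A

/-- The ordered product `g 0 * g 1 * ⋯ * g (d−1)`, factors in increasing order of the index. -/
def oprod {d : ℕ} (g : Fin d → 𝔸) : 𝔸 :=
  (List.ofFn g).prod

/-- The geometric Fourier transform with separable linear blade functions
`f¹_l(x,u) = ρ1_l(x,u)·i1_l(u)` (left kernel) and `f²_l(x,u) = ρ2_l(x,u)·i2_l(u)`
(right kernel). -/
def gft {m μ ν' : ℕ}
    (ρ1 : Fin μ → (Fin m → ℝ) → (Fin m → ℝ) → ℝ) (i1 : Fin μ → (Fin m → ℝ) → 𝔸)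
    (ρ2 : Fin ν' → (Fin m → ℝ) → (Fin m → ℝ) → ℝ) (i2 : Fin ν' → (Fin m → ℝ) → 𝔸)
    (A : (Fin m → ℝ) → 𝔸) (u : Fin m → ℝ) : 𝔸 :=
  ∫ x : Fin m → ℝ,
    oprod (fun l => NormedSpace.exp (-(ρ1 l x u • i1 l u))) * A x *
      oprod (fun l => NormedSpace.exp (-(ρ2 l x u • i2 l u)))

set_option linter.unusedSectionVars false
set_option maxHeartbeats 1000000

/-- If `X` semiconjugates `P` to `Y`, so do `X^n` and `Y^n`. -/
lemma pow_semiconj {X Y P : 𝔸} (h : X * P = P * Y) (n : ℕ) : X ^ n * P = P * Y ^ n := by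
  induction n with
  | zero => simp
  | succ n ih => rw [pow_succ, pow_succ, mul_assoc, h, ← mul_assoc, ih, mul_assoc]

lemma exp_semiconj {X Y P : 𝔸} (h : X * P = P * Y) :
    NormedSpace.exp X * P = P * NormedSpace.exp Y := by
  have hX := congrFun (NormedSpace.exp_eq_tsum (𝕂 := ℝ) (𝔸 := 𝔸)) X
  have hY := congrFun (NormedSpace.exp_eq_tsum (𝕂 := ℝ) (𝔸 := 𝔸)) Y
  rw [hX, hY, ← (NormedSpace.expSeries_summable' (𝕂 := ℝ) X).tsum_mul_right P,
    ← (NormedSpace.expSeries_summable' (𝕂 := ℝ) Y).tsum_mul_left P]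
  congr 1
  ext n
  rw [smul_mul_assoc, mul_smul_comm, pow_semiconj h]

set_option linter.unusedSectionVars false

lemma sq_neg_one_mul_self {E : 𝔸} (h : E ^ 2 = -1) : E * E = -1 := by rw [← sq]; exact h

lemma isUnit_of_sq_neg_one {E : 𝔸} (h : E ^ 2 = -1) : IsUnit E :=
  ⟨⟨E, -E, by rw [mul_neg, sq_neg_one_mul_self h, neg_neg],
      by rw [neg_mul, sq_neg_one_mul_self h, neg_neg]⟩, rfl⟩

lemma ringInverse_of_sq_neg_one {E : 𝔸} (h : E ^ 2 = -1) : Ring.inverse E = -E := by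
  have : Ring.inverse ((⟨E, -E, by rw [mul_neg, sq_neg_one_mul_self h, neg_neg],
      by rw [neg_mul, sq_neg_one_mul_self h, neg_neg]⟩ : 𝔸ˣ) : 𝔸) = -E := by
    rw [Ring.inverse_unit]; rfl
  exact this

/-- `exp(r • E) = cos r + sin r • E` when `E² = -1`. -/
lemma exp_smul_of_sq_neg_one {E : 𝔸} (h : E ^ 2 = -1) (r : ℝ) :
    NormedSpace.exp (r • E) = Real.cos r • (1 : 𝔸) + Real.sin r • E := by
  let +nondep : NormedAlgebra ℚ 𝔸 := .restrictScalars ℚ ℝ 𝔸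
  have hEE : E * E = -1 := sq_neg_one_mul_self h
  let φ : ℂ →+* 𝔸 :=
    { toFun := fun z => z.re • (1 : 𝔸) + z.im • E
      map_one' := by simp
      map_mul' := by
        intro z w
        simp only [Complex.mul_re, Complex.mul_im]
        rw [add_mul, mul_add, mul_add, smul_mul_smul_comm, smul_mul_smul_comm,
          smul_mul_smul_comm, smul_mul_smul_comm, one_mul, mul_one, one_mul, hEE]
        rw [smul_neg, ← smul_neg (z.im * w.im) (1:𝔸)]
        module
      map_zero' := by simp
      map_add' := by intro z w; simp [Complex.add_re, Complex.add_im, add_smul]; abel }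
  have hφ : Continuous φ := by
    show Continuous fun z : ℂ => z.re • (1 : 𝔸) + z.im • E
    fun_prop
  have key := NormedSpace.map_exp φ hφ ((r : ℂ) * Complex.I)
  have h1 : φ ((r : ℂ) * Complex.I) = r • E := by
    show ((r : ℂ) * Complex.I).re • (1 : 𝔸) + ((r : ℂ) * Complex.I).im • E = r • E
    simp
  have h2 : NormedSpace.exp ((r : ℂ) * Complex.I) = Complex.exp ((r : ℂ) * Complex.I) := by
    rw [Complex.exp_eq_exp_ℂ]
  rw [h1, h2, Complex.exp_mul_I] at key
  rw [← key]
  show (Complex.cos r + Complex.sin r * Complex.I).re • (1 : 𝔸) +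
      (Complex.cos r + Complex.sin r * Complex.I).im • E = _
  simp [← Complex.ofReal_cos, ← Complex.ofReal_sin]

lemma norm_exp_smul_le {E : 𝔸} (h : E ^ 2 = -1) (r : ℝ) :
    ‖NormedSpace.exp (r • E)‖ ≤ ‖(1 : 𝔸)‖ + ‖E‖ := by
  rw [exp_smul_of_sq_neg_one h r]
  refine (norm_add_le _ _).trans ?_
  rw [norm_smul, norm_smul]
  gcongr
  · exact (mul_le_of_le_one_left (norm_nonneg _) (abs_le.mpr ⟨Real.neg_one_le_cos r, Real.cos_le_one r⟩)).trans le_rfl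
  · exact mul_le_of_le_one_left (norm_nonneg _) (abs_le.mpr ⟨Real.neg_one_le_sin r, Real.sin_le_one r⟩)

lemma neg_one_pow_mul_eq_smul (n : ℕ) (X : 𝔸) : (-1 : 𝔸) ^ n * X = ((-1 : ℝ) ^ n) • X := by
  have : (-1 : 𝔸) = (-1 : ℝ) • 1 := by simp
  rw [this, smul_pow, one_pow, smul_mul_assoc, one_mul]

lemma cPart_eq {E : 𝔸} (h : E ^ 2 = -1) (s : Fin 2) (A : 𝔸) :
    cPart E s A = (2 : ℝ)⁻¹ • (A - ((-1 : ℝ) ^ (s : ℕ)) • (E * A * E)) := by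
  rw [cPart, ringInverse_of_sq_neg_one h, neg_one_pow_mul_eq_smul]
  rw [neg_mul, neg_mul, smul_neg, sub_eq_add_neg]

lemma cPart_zero_add_one (E : 𝔸) (A : 𝔸) : cPart E 0 A + cPart E 1 A = A := by
  rw [cPart, cPart]
  rw [← smul_add]
  have : (A + (-1:𝔸) ^ ((0 : Fin 2) : ℕ) * (Ring.inverse E * A * E)) +
      (A + (-1:𝔸) ^ ((1 : Fin 2) : ℕ) * (Ring.inverse E * A * E)) = (2:ℝ) • A := by
    simp only [Fin.val_zero, pow_zero, Fin.val_one, pow_one, one_mul, neg_one_mul]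
    rw [two_smul]; abel
  rw [this, smul_smul]; norm_num

lemma cPart_semiconj {E : 𝔸} (h : E ^ 2 = -1) (s : Fin 2) (A : 𝔸) :
    E * cPart E s A = ((-1 : ℝ) ^ (s : ℕ)) • (cPart E s A * E) := by
  have hEE := sq_neg_one_mul_self h
  have h1 : E * (E * A * E) = -(A * E) := by
    simp only [← mul_assoc]
    rw [hEE, neg_one_mul, neg_mul]
  have h2 : E * A * E * E = -(E * A) := by
    rw [mul_assoc (E * A) E E, hEE, mul_neg_one]
  rw [cPart_eq h]
  fin_cases s <;>
    simp only [Fin.val_zero, pow_zero, Fin.val_one, pow_one, one_smul, neg_smul, sub_neg_eq_add,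
      mul_smul_comm, smul_mul_assoc, mul_sub, sub_mul, mul_add, add_mul, h1, h2] <;>
    module

lemma cPart_semiconj_preserve {E F : 𝔸} (hF : F ^ 2 = -1) (hEF : E * F = F * E)
    {c : ℝ} {A : 𝔸} (hEA : E * A = c • (A * E)) (s : Fin 2) :
    E * cPart F s A = c • (cPart F s A * E) := by
  have h1 : E * (F * A * F) = c • (F * A * F * E) := by
    simp only [← mul_assoc]
    rw [hEF, mul_assoc F E A, hEA, mul_smul_comm, smul_mul_assoc]
    congr 1
    simp only [mul_assoc]
    rw [hEF]
  rw [cPart_eq hF]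
  simp only [mul_sub, sub_mul, mul_smul_comm, smul_mul_assoc, hEA, h1]
  module

lemma cPart_mul_left {F W : 𝔸} (hF : F ^ 2 = -1) (hWF : W * F = F * W) (s : Fin 2) (A : 𝔸) :
    cPart F s (W * A) = W * cPart F s A := by
  have h1 : F * (W * A) * F = W * (F * A * F) := by
    simp only [← mul_assoc, ← hWF]
  rw [cPart_eq hF, cPart_eq hF, h1, mul_smul_comm, mul_sub, mul_smul_comm]

lemma cPart_mul_right {F W : 𝔸} (hF : F ^ 2 = -1) (hWF : W * F = F * W) (s : Fin 2) (A : 𝔸) :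
    cPart F s (A * W) = cPart F s A * W := by
  have h1 : F * (A * W) * F = (F * A * F) * W := by
    simp only [← mul_assoc]
    rw [mul_assoc (F * A) W F, hWF, ← mul_assoc]
  rw [cPart_eq hF, cPart_eq hF, h1, smul_mul_assoc, sub_mul, smul_mul_assoc]

lemma cIter_cons (p : 𝔸 × Fin 2) (L : List (𝔸 × Fin 2)) (A : 𝔸) :
    cIter (p :: L) A = cIter L (cPart p.1 p.2 A) := rfl

lemma cIter_semiconj_preserve {E : 𝔸} (L : List (𝔸 × Fin 2))
    (hL : ∀ p ∈ L, p.1 ^ 2 = -1 ∧ E * p.1 = p.1 * E) {c : ℝ} {A : 𝔸}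
    (hEA : E * A = c • (A * E)) : E * cIter L A = c • (cIter L A * E) := by
  induction L generalizing A with
  | nil => exact hEA
  | cons q L ih =>
    rw [cIter_cons]
    exact ih (fun p hp => hL p (List.mem_cons_of_mem q hp))
      (cPart_semiconj_preserve (hL q (List.mem_cons_self)).1
        (hL q (List.mem_cons_self)).2 hEA q.2)

lemma cIter_semiconj (L : List (𝔸 × Fin 2)) (hsq : ∀ p ∈ L, p.1 ^ 2 = -1)
    (hc : ∀ p ∈ L, ∀ q ∈ L, p.1 * q.1 = q.1 * p.1) (A : 𝔸) :
    ∀ p ∈ L, p.1 * cIter L A = ((-1 : ℝ) ^ ((p.2 : ℕ))) • (cIter L A * p.1) := by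
  induction L generalizing A with
  | nil => intro p hp; exact absurd hp (List.not_mem_nil)
  | cons q L ih =>
    intro p hp
    rcases List.mem_cons.mp hp with h | h
    · subst h
      rw [cIter_cons]
      exact cIter_semiconj_preserve L
        (fun r hr => ⟨hsq r (List.mem_cons_of_mem p hr),
          hc p (List.mem_cons_self) r (List.mem_cons_of_mem p hr)⟩)
        (cPart_semiconj (hsq p (List.mem_cons_self)) p.2 A)
    · rw [cIter_cons]
      exact ih (fun r hr => hsq r (List.mem_cons_of_mem q hr))
        (fun r hr t ht => hc r (List.mem_cons_of_mem q hr) t (List.mem_cons_of_mem q ht)) _ p h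

lemma cIter_mul_left {W : 𝔸} (L : List (𝔸 × Fin 2))
    (hL : ∀ p ∈ L, p.1 ^ 2 = -1 ∧ W * p.1 = p.1 * W) (A : 𝔸) :
    cIter L (W * A) = W * cIter L A := by
  induction L generalizing A with
  | nil => rfl
  | cons q L ih =>
    rw [cIter_cons, cIter_cons,
      cPart_mul_left (hL q (List.mem_cons_self)).1 (hL q (List.mem_cons_self)).2]
    exact ih (fun p hp => hL p (List.mem_cons_of_mem q hp)) _

lemma cIter_mul_right {W : 𝔸} (L : List (𝔸 × Fin 2))
    (hL : ∀ p ∈ L, p.1 ^ 2 = -1 ∧ W * p.1 = p.1 * W) (A : 𝔸) :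
    cIter L (A * W) = cIter L A * W := by
  induction L generalizing A with
  | nil => rfl
  | cons q L ih =>
    rw [cIter_cons, cIter_cons,
      cPart_mul_right (hL q (List.mem_cons_self)).1 (hL q (List.mem_cons_self)).2]
    exact ih (fun p hp => hL p (List.mem_cons_of_mem q hp)) _

lemma cIter_sum {d : ℕ} (ε : Fin d → 𝔸) (A : 𝔸) :
    ∑ b : Fin d → Fin 2, cIter (List.ofFn (fun l => (ε l, b l))) A = A := by
  induction d generalizing A with
  | zero => simp [cIter]
  | succ d ih =>
    rw [← (Fin.consEquiv (fun _ : Fin (d+1) => Fin 2)).sum_comp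
      (fun b => cIter (List.ofFn (fun l => (ε l, b l))) A)]
    rw [Fintype.sum_prod_type]
    have hof : ∀ (b0 : Fin 2) (b : Fin d → Fin 2),
        List.ofFn (fun l : Fin (d+1) => (ε l, (Fin.consEquiv (fun _ : Fin (d+1) => Fin 2) (b0, b)) l)) =
          (ε 0, b0) :: List.ofFn (fun l : Fin d => (ε l.succ, b l)) := by
      intro b0 b
      rw [List.ofFn_succ]
      simp [Fin.consEquiv]
    simp only [hof, cIter_cons]
    rw [Fin.sum_univ_two]
    rw [ih (fun l => ε l.succ), ih (fun l => ε l.succ)]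
    exact cPart_zero_add_one _ _

def cPartCLM (E : 𝔸) (s : Fin 2) : 𝔸 →L[ℝ] 𝔸 :=
  (2 : ℝ)⁻¹ • (ContinuousLinearMap.id ℝ 𝔸 +
    (ContinuousLinearMap.mul ℝ 𝔸 ((-1 : 𝔸) ^ (s : ℕ))).comp
      (((ContinuousLinearMap.mul ℝ 𝔸).flip E).comp
        (ContinuousLinearMap.mul ℝ 𝔸 (Ring.inverse E))))

lemma cPartCLM_apply (E : 𝔸) (s : Fin 2) (A : 𝔸) : cPartCLM E s A = cPart E s A := by
  simp [cPartCLM, cPart, ContinuousLinearMap.mul_apply', ContinuousLinearMap.flip_apply,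
    mul_assoc]

def cIterCLM (L : List (𝔸 × Fin 2)) : 𝔸 →L[ℝ] 𝔸 :=
  L.foldl (fun φ p => (cPartCLM p.1 p.2).comp φ) (ContinuousLinearMap.id ℝ 𝔸)

lemma cIterCLM_apply (L : List (𝔸 × Fin 2)) (A : 𝔸) : cIterCLM L A = cIter L A := by
  suffices h : ∀ (φ : 𝔸 →L[ℝ] 𝔸),
      (L.foldl (fun φ p => (cPartCLM p.1 p.2).comp φ) φ) A = cIter L (φ A) by
    exact h (ContinuousLinearMap.id ℝ 𝔸)
  induction L with
  | nil => intro φ; rfl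
  | cons q L ih =>
    intro φ
    show (L.foldl (fun φ p => (cPartCLM p.1 p.2).comp φ) ((cPartCLM q.1 q.2).comp φ)) A =
      cIter L (cPart q.1 q.2 (φ A))
    rw [ih ((cPartCLM q.1 q.2).comp φ)]
    simp [cPartCLM_apply]

lemma oprod_succ {d : ℕ} (f : Fin (d+1) → 𝔸) : oprod f = f 0 * oprod (fun l => f l.succ) := by
  simp [oprod, List.ofFn_succ]

lemma list_prod_semiconj (P : 𝔸) : ∀ (L : List (𝔸 × 𝔸)), (∀ p ∈ L, p.1 * P = P * p.2) →
    (L.map Prod.fst).prod * P = P * (L.map Prod.snd).prod := by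
  intro L
  induction L with
  | nil => simp
  | cons q L ih =>
    intro h
    simp only [List.map_cons, List.prod_cons]
    rw [mul_assoc, ih (fun p hp => h p (List.mem_cons_of_mem q hp)), ← mul_assoc,
      h q (List.mem_cons_self), mul_assoc]

lemma oprod_semiconj {d : ℕ} (a b : Fin d → 𝔸) (P : 𝔸) (h : ∀ l, a l * P = P * b l) :
    oprod a * P = P * oprod b := by
  have := list_prod_semiconj P (List.ofFn (fun l => (a l, b l))) (by
    intro p hp
    rcases (List.mem_ofFn).mp hp with ⟨l, rfl⟩
    exact h l)
  simpa [List.map_ofFn, Function.comp_def, oprod] using this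

lemma oprod_commute {d : ℕ} (a : Fin d → 𝔸) (X : 𝔸) (h : ∀ l, Commute X (a l)) :
    Commute X (oprod a) := by
  apply Commute.list_prod_right
  intro y hy
  rcases (List.mem_ofFn).mp hy with ⟨l, rfl⟩
  exact h l

lemma oprod_mul {d : ℕ} (a b : Fin d → 𝔸) (h : ∀ l k, Commute (a l) (b k)) :
    oprod (fun l => a l * b l) = oprod a * oprod b := by
  induction d with
  | zero => simp [oprod]
  | succ d ih =>
    rw [oprod_succ, oprod_succ a, oprod_succ b,
      ih (fun l => a l.succ) (fun l => b l.succ) (fun l k => h l.succ k.succ)]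
    have hb : oprod (fun l => a l.succ) * b 0 = b 0 * oprod (fun l => a l.succ) :=
      oprod_semiconj _ _ _ (fun l => (h l.succ 0).eq)
    rw [mul_assoc, mul_assoc, ← mul_assoc (oprod fun l => a l.succ), hb, mul_assoc]

lemma oprod_norm_le {d : ℕ} (a : Fin d → 𝔸) (c : Fin d → ℝ) (h : ∀ l, ‖a l‖ ≤ c l) :
    ‖oprod a‖ ≤ ‖(1 : 𝔸)‖ * ∏ l, c l := by
  induction d with
  | zero => simp [oprod]
  | succ d ih =>
    rw [oprod_succ, Fin.prod_univ_succ]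
    calc ‖a 0 * oprod (fun l => a l.succ)‖ ≤ ‖a 0‖ * ‖oprod (fun l => a l.succ)‖ := norm_mul_le _ _
      _ ≤ c 0 * (‖(1 : 𝔸)‖ * ∏ l : Fin d, c l.succ) := by
          apply mul_le_mul (h 0) (ih _ _ (fun l => h l.succ)) (norm_nonneg _)
          exact le_trans (norm_nonneg _) (h 0)
      _ = ‖(1 : 𝔸)‖ * (c 0 * ∏ l : Fin d, c l.succ) := by ring

/-- The ordered kernel product `∏ exp(-(r l • ε l))`. -/
def kprod {d : ℕ} (r : Fin d → ℝ) (ε : Fin d → 𝔸) : 𝔸 :=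
  oprod fun l => NormedSpace.exp (-(r l • ε l))

lemma kprod_norm_le {d : ℕ} (r : Fin d → ℝ) (ε : Fin d → 𝔸) (hsq : ∀ l, ε l ^ 2 = -1) :
    ‖kprod r ε‖ ≤ ‖(1 : 𝔸)‖ * ∏ l, (‖(1 : 𝔸)‖ + ‖ε l‖) := by
  apply oprod_norm_le
  intro l
  rw [← neg_smul]
  exact norm_exp_smul_le (hsq l) _

lemma kprod_add {d : ℕ} (r r' : Fin d → ℝ) (ε : Fin d → 𝔸)
    (hc : ∀ l k, ε l * ε k = ε k * ε l) :
    kprod (fun l => r l + r' l) ε = kprod r ε * kprod r' ε := by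
  let +nondep : NormedAlgebra ℚ 𝔸 := .restrictScalars ℚ ℝ 𝔸
  unfold kprod
  have hfac : ∀ l, NormedSpace.exp (-((r l + r' l) • ε l)) =
      NormedSpace.exp (-(r l • ε l)) * NormedSpace.exp (-(r' l • ε l)) := by
    intro l
    rw [show -((r l + r' l) • ε l) = -(r l • ε l) + -(r' l • ε l) by rw [add_smul]; abel]
    exact NormedSpace.exp_add_of_commute (((Commute.refl (ε l)).smul_left _).smul_right
      _).neg_left.neg_right
  simp only [hfac]
  apply oprod_mul
  intro l k
  have hlk : Commute (ε l) (ε k) := hc l k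
  exact (((hlk.smul_left _).smul_right _).neg_left.neg_right).exp

lemma kprod_semiconj {d : ℕ} (r : Fin d → ℝ) (ε : Fin d → 𝔸) (σ : Fin d → Fin 2) (P : 𝔸)
    (h : ∀ l, ε l * P = ((-1 : ℝ) ^ ((σ l : ℕ))) • (P * ε l)) :
    kprod r ε * P = P * kprod (fun l => (-1 : ℝ) ^ ((σ l : ℕ)) * r l) ε := by
  apply oprod_semiconj
  intro l
  apply exp_semiconj
  rw [neg_mul, mul_neg, smul_mul_assoc, h l, smul_smul, mul_smul_comm, mul_comm (r l)]

lemma kprod_flip_semiconj {d : ℕ} (r : Fin d → ℝ) (ε : Fin d → 𝔸) (σ : Fin d → Fin 2) (P : 𝔸)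
    (h : ∀ l, ε l * P = ((-1 : ℝ) ^ ((σ l : ℕ))) • (P * ε l)) :
    kprod (fun l => (-1 : ℝ) ^ ((σ l : ℕ)) * r l) ε * P = P * kprod r ε := by
  have := kprod_semiconj (fun l => (-1 : ℝ) ^ ((σ l : ℕ)) * r l) ε σ P h
  rw [this]
  congr 1
  unfold kprod
  congr 1
  funext l
  show NormedSpace.exp (-(((-1:ℝ) ^ ((σ l : ℕ)) * ((-1:ℝ) ^ ((σ l : ℕ)) * r l)) • ε l)) = _
  rw [← mul_assoc, ← pow_add, Even.neg_one_pow ⟨(σ l : ℕ), rfl⟩, one_mul]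

lemma kprod_commute {d : ℕ} (r : Fin d → ℝ) (ε : Fin d → 𝔸)
    (hc : ∀ l k, ε l * ε k = ε k * ε l) (k : Fin d) :
    ε k * kprod r ε = kprod r ε * ε k := by
  have : Commute (ε k) (kprod r ε) := by
    apply oprod_commute
    intro l
    have hkl : Commute (ε k) (ε l) := hc k l
    exact ((hkl.smul_right _).neg_right).exp_right
  exact this.eq

lemma oprod_continuous {X : Type*} [TopologicalSpace X] {d : ℕ} (f : Fin d → X → 𝔸)
    (h : ∀ l, Continuous (f l)) : Continuous fun x => oprod (fun l => f l x) := by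
  induction d with
  | zero =>
    simp only [oprod, List.ofFn_zero, List.prod_nil]
    exact continuous_const
  | succ d ih =>
    simp only [oprod_succ]
    exact (h 0).mul (ih _ (fun l => h l.succ))

lemma MeasureTheory.Integrable.mul_bdd'' {α : Type*} [MeasurableSpace α] {μ : Measure α} {f g : α → 𝔸} {c : ℝ}
    (hg : Integrable g μ) (hf : AEStronglyMeasurable f μ) (hf_bound : ∀ᵐ x ∂μ, ‖f x‖ ≤ c) :
    Integrable (fun x => g x * f x) μ := by
  refine Integrable.mono' (hg.norm.mul_const c) (hg.1.mul hf) ?_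
  filter_upwards [hf_bound] with x hx
  calc ‖g x * f x‖ ≤ ‖g x‖ * ‖f x‖ := norm_mul_le _ _
    _ ≤ ‖g x‖ * c := mul_le_mul_of_nonneg_left hx (norm_nonneg _)

section Core

variable {m d1 d2 : ℕ} (e : Fin d1 → 𝔸) (g : Fin d2 → 𝔸)
  (r1 : (Fin m → ℝ) → Fin d1 → ℝ) (r2 : (Fin m → ℝ) → Fin d2 → ℝ)

/-- Continuity of a kernel whose coefficients are linear in `x`. -/
lemma kprod_cont {d : ℕ} (ε : Fin d → 𝔸) (r : (Fin m → ℝ) → Fin d → ℝ)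
    (hr : ∀ l, IsLinearMap ℝ (fun x => r x l)) :
    Continuous fun x => kprod (r x) ε := by
  let +nondep : NormedAlgebra ℚ 𝔸 := .restrictScalars ℚ ℝ 𝔸
  apply oprod_continuous
  intro l
  exact NormedSpace.exp_continuous.comp
    ((((IsLinearMap.mk' _ (hr l)).continuous_of_finiteDimensional).smul continuous_const).neg)

lemma key_eq (hsq_e : ∀ l, e l ^ 2 = -1) (hsq_g : ∀ l, g l ^ 2 = -1)
    (hcomm_e : ∀ l k, e l * e k = e k * e l) (hcomm_g : ∀ l k, g l * g k = g k * g l)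
    (hr1 : ∀ l, IsLinearMap ℝ (fun x => r1 x l)) (hr2 : ∀ l, IsLinearMap ℝ (fun x => r2 x l))
    (C B : (Fin m → ℝ) → 𝔸) (hC : Integrable C) (hB : Integrable B) :
    (∫ x : Fin m → ℝ, kprod (r1 x) e * (∫ y : Fin m → ℝ, C y * B (x - y)) * kprod (r2 x) g) =
      ∫ y : Fin m → ℝ, ∫ x : Fin m → ℝ,
        (kprod (r1 y) e * kprod (r1 x) e) * (C y * B x) *
          (kprod (r2 y) g * kprod (r2 x) g) := by
  have hK1c : Continuous fun x => kprod (r1 x) e := kprod_cont e r1 hr1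
  have hK2c : Continuous fun x => kprod (r2 x) g := kprod_cont g r2 hr2
  set cE : ℝ := ‖(1 : 𝔸)‖ * ∏ l, (‖(1 : 𝔸)‖ + ‖e l‖) with hcE
  set cG : ℝ := ‖(1 : 𝔸)‖ * ∏ l, (‖(1 : 𝔸)‖ + ‖g l‖) with hcG
  have hK1b : ∀ r : Fin d1 → ℝ, ‖kprod r e‖ ≤ cE := fun r => kprod_norm_le r e hsq_e
  have hK2b : ∀ r : Fin d2 → ℝ, ‖kprod r g‖ ≤ cG := fun r => kprod_norm_le r g hsq_g
  -- joint integrability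
  have hconv : Integrable (fun p : (Fin m → ℝ) × (Fin m → ℝ) => C p.2 * B (p.1 - p.2))
      (volume.prod volume) := by
    simpa [ContinuousLinearMap.mul_apply'] using
      hC.convolution_integrand (ContinuousLinearMap.mul ℝ 𝔸) hB
  have hQint : Integrable (fun p : (Fin m → ℝ) × (Fin m → ℝ) =>
      kprod (r1 p.1) e * (C p.2 * B (p.1 - p.2)) * kprod (r2 p.1) g) (volume.prod volume) := by
    apply Integrable.mul_bdd'' (c := cG)
    · apply Integrable.bdd_mul (c := cE) hconv
      · exact (hK1c.comp continuous_fst).aestronglyMeasurable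
      · exact Filter.Eventually.of_forall fun p => hK1b _
    · exact (hK2c.comp continuous_fst).aestronglyMeasurable
    · exact Filter.Eventually.of_forall fun p => hK2b _
  -- step 1 : pull the kernels into the inner integral (a.e. x)
  have step1 : (∫ x : Fin m → ℝ,
        kprod (r1 x) e * (∫ y : Fin m → ℝ, C y * B (x - y)) * kprod (r2 x) g) =
      ∫ x : Fin m → ℝ, ∫ y : Fin m → ℝ,
        kprod (r1 x) e * (C y * B (x - y)) * kprod (r2 x) g := by
    apply integral_congr_ae
    have h_ae := hC.ae_convolution_exists (L := ContinuousLinearMap.mul ℝ 𝔸)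
      (μ := volume) (ν := volume) hB
    filter_upwards [h_ae] with x hx
    have hint : Integrable fun y => C y * B (x - y) := by
      simpa [ConvolutionExistsAt, ContinuousLinearMap.mul_apply'] using hx
    let φ : 𝔸 →L[ℝ] 𝔸 := ((ContinuousLinearMap.mul ℝ 𝔸).flip (kprod (r2 x) g)).comp
      (ContinuousLinearMap.mul ℝ 𝔸 (kprod (r1 x) e))
    have hφ : ∀ z, φ z = kprod (r1 x) e * z * kprod (r2 x) g := fun z => rfl
    rw [← hφ, ← ContinuousLinearMap.integral_comp_comm φ hint]
    simp [hφ]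
  rw [step1]
  -- step 2 : Fubini
  rw [show (fun x : Fin m → ℝ => ∫ y : Fin m → ℝ,
        kprod (r1 x) e * (C y * B (x - y)) * kprod (r2 x) g) =
      fun x : Fin m → ℝ => ∫ y : Fin m → ℝ, Function.uncurry
        (fun x y : Fin m → ℝ => kprod (r1 x) e * (C y * B (x - y)) * kprod (r2 x) g) (x, y)
    from rfl]
  rw [integral_integral_swap hQint]
  -- step 3 : translation + kernel splitting
  apply integral_congr_ae
  apply Filter.Eventually.of_forall
  intro y
  show (∫ x : Fin m → ℝ, kprod (r1 x) e * (C y * B (x - y)) * kprod (r2 x) g) = _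
  have := integral_add_right_eq_self
    (μ := (volume : Measure (Fin m → ℝ)))
    (fun x => kprod (r1 x) e * (C y * B (x - y)) * kprod (r2 x) g) y
  rw [← this]
  apply integral_congr_ae
  apply Filter.Eventually.of_forall
  intro x
  have hxy : x + y - y = x := by abel
  have hsplit1 : kprod (r1 (x + y)) e = kprod (r1 y) e * kprod (r1 x) e := by
    have : r1 (x + y) = fun l => r1 y l + r1 x l := by
      funext l
      rw [show x + y = y + x by abel]
      exact (hr1 l).map_add y x
    rw [this]
    exact kprod_add _ _ _ hcomm_e
  have hsplit2 : kprod (r2 (x + y)) g = kprod (r2 y) g * kprod (r2 x) g := by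
    have : r2 (x + y) = fun l => r2 y l + r2 x l := by
      funext l
      rw [show x + y = y + x by abel]
      exact (hr2 l).map_add y x
    rw [this]
    exact kprod_add _ _ _ hcomm_g
  show kprod (r1 (x + y)) e * (C y * B (x + y - y)) * kprod (r2 (x + y)) g = _
  rw [hxy, hsplit1, hsplit2]

end Core

section OfFn

variable {d : ℕ} (ε : Fin d → 𝔸) (b : Fin d → Fin 2)

lemma cIter_ofFn_semiconj (hsq : ∀ l, ε l ^ 2 = -1)
    (hcm : ∀ l k, ε l * ε k = ε k * ε l) (A : 𝔸) (l : Fin d) :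
    ε l * cIter (List.ofFn fun i => (ε i, b i)) A =
      ((-1 : ℝ) ^ ((b l : ℕ))) • (cIter (List.ofFn fun i => (ε i, b i)) A * ε l) :=
  cIter_semiconj (List.ofFn fun i => (ε i, b i))
    (fun p hp => by rcases (List.mem_ofFn).mp hp with ⟨i, rfl⟩; exact hsq i)
    (fun p hp q hq => by
      rcases (List.mem_ofFn).mp hp with ⟨i, rfl⟩
      rcases (List.mem_ofFn).mp hq with ⟨k, rfl⟩
      exact hcm i k) A (ε l, b l) ((List.mem_ofFn).mpr ⟨l, rfl⟩)

lemma cIter_ofFn_mul_left (hsq : ∀ l, ε l ^ 2 = -1) {W : 𝔸}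
    (hW : ∀ l, W * ε l = ε l * W) (A : 𝔸) :
    cIter (List.ofFn fun i => (ε i, b i)) (W * A) =
      W * cIter (List.ofFn fun i => (ε i, b i)) A :=
  cIter_mul_left _ (fun p hp => by
    rcases (List.mem_ofFn).mp hp with ⟨i, rfl⟩; exact ⟨hsq i, hW i⟩) A

lemma cIter_ofFn_mul_right (hsq : ∀ l, ε l ^ 2 = -1) {W : 𝔸}
    (hW : ∀ l, W * ε l = ε l * W) (A : 𝔸) :
    cIter (List.ofFn fun i => (ε i, b i)) (A * W) =
      cIter (List.ofFn fun i => (ε i, b i)) A * W :=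
  cIter_mul_right _ (fun p hp => by
    rcases (List.mem_ofFn).mp hp with ⟨i, rfl⟩; exact ⟨hsq i, hW i⟩) A

end OfFn

lemma shuffle1 {K1y K1x Cy Bk K2y K2x K2f : 𝔸} (h2 : K2f * Bk = Bk * K2y) :
    (K1y * K1x) * (Cy * Bk) * (K2y * K2x) = (K1y * K1x) * ((Cy * K2f) * (Bk * K2x)) := by
  have aux : Bk * (K2y * K2x) = K2f * (Bk * K2x) := by rw [← mul_assoc, ← h2, mul_assoc]
  simp only [mul_assoc, aux]

lemma shuffle2 {K1y K1x Wj Bk K2x K1f : 𝔸} (h1 : K1x * Wj = Wj * K1f) :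
    (K1y * K1x) * (Wj * (Bk * K2x)) = (K1y * Wj) * ((K1f * Bk) * K2x) := by
  have aux : ∀ Z, K1x * (Wj * Z) = Wj * (K1f * Z) := fun Z => by
    rw [← mul_assoc, h1, mul_assoc]
  simp only [mul_assoc, aux]

lemma shuffle3 {K1y K1x Ck Bx K2y K2x K1f : 𝔸} (h1 : K1x * Ck = Ck * K1f) :
    (K1y * K1x) * (Ck * Bx) * (K2y * K2x) =
      K1y * (Ck * ((K1f * Bx) * (K2y * K2x))) := by
  have aux : ∀ Z, K1x * (Ck * Z) = Ck * (K1f * Z) := fun Z => by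
    rw [← mul_assoc, h1, mul_assoc]
  simp only [mul_assoc, aux]

lemma shuffle4 {K1y Ck Tk K2y K2x K2f : 𝔸} (h2 : K2f * Tk = Tk * K2y) :
    K1y * (Ck * (Tk * (K2y * K2x))) = ((K1y * Ck) * K2f) * (Tk * K2x) := by
  have aux : Tk * (K2y * K2x) = K2f * (Tk * K2x) := by rw [← mul_assoc, ← h2, mul_assoc]
  simp only [mul_assoc, aux]

section Main

variable {m d1 d2 : ℕ}

/-- Integrability of kernel × integrable × kernel. -/
lemma kik_integrable (e : Fin d1 → 𝔸) (g : Fin d2 → 𝔸)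
    (hsq_e : ∀ l, e l ^ 2 = -1) (hsq_g : ∀ l, g l ^ 2 = -1)
    (ra : (Fin m → ℝ) → Fin d1 → ℝ) (rb : (Fin m → ℝ) → Fin d2 → ℝ)
    (hca : Continuous fun x => kprod (ra x) e) (hcb : Continuous fun x => kprod (rb x) g)
    (F : (Fin m → ℝ) → 𝔸) (hF : Integrable F) :
    Integrable fun x => kprod (ra x) e * F x * kprod (rb x) g := by
  apply Integrable.mul_bdd'' (c := ‖(1 : 𝔸)‖ * ∏ l, (‖(1 : 𝔸)‖ + ‖g l‖))
  · apply Integrable.bdd_mul (c := ‖(1 : 𝔸)‖ * ∏ l, (‖(1 : 𝔸)‖ + ‖e l‖)) hF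
      hca.aestronglyMeasurable
    exact Filter.Eventually.of_forall fun x => kprod_norm_le _ _ hsq_e
  · exact hcb.aestronglyMeasurable
  · exact Filter.Eventually.of_forall fun x => kprod_norm_le _ _ hsq_g

lemma lin_mul_const (r1 : (Fin m → ℝ) → Fin d1 → ℝ)
    (hr1 : ∀ l, IsLinearMap ℝ fun x => r1 x l) (c : Fin d1 → ℝ) (l : Fin d1) :
    IsLinearMap ℝ fun x => c l * r1 x l := by
  constructor
  · intro a b; rw [(hr1 l).map_add]; ring
  · intro s a; rw [(hr1 l).map_smul]; simp only [smul_eq_mul]; ring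

lemma core1 (e : Fin d1 → 𝔸) (g : Fin d2 → 𝔸)
    (r1 : (Fin m → ℝ) → Fin d1 → ℝ) (r2 : (Fin m → ℝ) → Fin d2 → ℝ)
    (hsq_e : ∀ l, e l ^ 2 = -1) (hsq_g : ∀ l, g l ^ 2 = -1)
    (hcomm_e : ∀ l k, e l * e k = e k * e l) (hcomm_g : ∀ l k, g l * g k = g k * g l)
    (hr1 : ∀ l, IsLinearMap ℝ (fun x => r1 x l)) (hr2 : ∀ l, IsLinearMap ℝ (fun x => r2 x l))
    (C B : (Fin m → ℝ) → 𝔸) (hC : Integrable C) (hB : Integrable B) :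
    (∫ y : Fin m → ℝ, ∫ x : Fin m → ℝ,
        (kprod (r1 y) e * kprod (r1 x) e) * (C y * B x) * (kprod (r2 y) g * kprod (r2 x) g)) =
      ∑ j' : Fin d1 → Fin 2, ∑ k' : Fin d2 → Fin 2,
        cIter (List.ofFn fun l => (e l, j' l))
          (∫ y : Fin m → ℝ, kprod (r1 y) e * C y *
            kprod (fun l => (-1 : ℝ) ^ ((k' l : ℕ)) * r2 y l) g) *
        (∫ x : Fin m → ℝ, kprod (fun l => (-1 : ℝ) ^ ((j' l : ℕ)) * r1 x l) e *
          cIter (List.ofFn fun l => (g l, k' l)) (B x) * kprod (r2 x) g) := by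
  classical
  have hK1c : Continuous fun x => kprod (r1 x) e := kprod_cont e r1 hr1
  have hK2c : Continuous fun x => kprod (r2 x) g := kprod_cont g r2 hr2
  have hK1fc : ∀ j' : Fin d1 → Fin 2,
      Continuous fun x => kprod (fun l => (-1 : ℝ) ^ ((j' l : ℕ)) * r1 x l) e := fun j' =>
    kprod_cont e _ (lin_mul_const r1 hr1 _)
  have hK2fc : ∀ k' : Fin d2 → Fin 2,
      Continuous fun x => kprod (fun l => (-1 : ℝ) ^ ((k' l : ℕ)) * r2 x l) g := fun k' =>
    kprod_cont g _ (lin_mul_const r2 hr2 _)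
  -- integrability of the B-side integrand
  have hBk : ∀ k' : Fin d2 → Fin 2,
      Integrable fun x => cIter (List.ofFn fun l => (g l, k' l)) (B x) := by
    intro k'
    have := (cIterCLM (List.ofFn fun l => (g l, k' l))).integrable_comp hB
    simpa only [cIterCLM_apply] using this
  have hT2 : ∀ (j' : Fin d1 → Fin 2) (k' : Fin d2 → Fin 2),
      Integrable fun x => kprod (fun l => (-1 : ℝ) ^ ((j' l : ℕ)) * r1 x l) e *
        cIter (List.ofFn fun l => (g l, k' l)) (B x) * kprod (r2 x) g := fun j' k' =>
    kik_integrable e g hsq_e hsq_g _ _ (hK1fc j') hK2c _ (hBk k')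
  -- integrability of the C-side integrand
  have hW : ∀ k' : Fin d2 → Fin 2,
      Integrable fun y => C y * kprod (fun l => (-1 : ℝ) ^ ((k' l : ℕ)) * r2 y l) g := by
    intro k'
    apply hC.mul_bdd'' (c := ‖(1 : 𝔸)‖ * ∏ l, (‖(1 : 𝔸)‖ + ‖g l‖))
      (hK2fc k').aestronglyMeasurable
    exact Filter.Eventually.of_forall fun y => kprod_norm_le _ _ hsq_g
  have hWj : ∀ (j' : Fin d1 → Fin 2) (k' : Fin d2 → Fin 2),
      Integrable fun y => cIter (List.ofFn fun l => (e l, j' l))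
        (C y * kprod (fun l => (-1 : ℝ) ^ ((k' l : ℕ)) * r2 y l) g) := by
    intro j' k'
    have := (cIterCLM (List.ofFn fun l => (e l, j' l))).integrable_comp (hW k')
    simpa only [cIterCLM_apply] using this
  have hT1 : ∀ (j' : Fin d1 → Fin 2) (k' : Fin d2 → Fin 2),
      Integrable fun y => kprod (r1 y) e * cIter (List.ofFn fun l => (e l, j' l))
        (C y * kprod (fun l => (-1 : ℝ) ^ ((k' l : ℕ)) * r2 y l) g) := by
    intro j' k'
    apply Integrable.bdd_mul (c := ‖(1 : 𝔸)‖ * ∏ l, (‖(1 : 𝔸)‖ + ‖e l‖)) (hWj j' k')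
      hK1c.aestronglyMeasurable
    exact Filter.Eventually.of_forall fun y => kprod_norm_le _ _ hsq_e
  -- also integrand for the final C-side value
  have hCK : ∀ k' : Fin d2 → Fin 2,
      Integrable fun y => kprod (r1 y) e * C y *
        kprod (fun l => (-1 : ℝ) ^ ((k' l : ℕ)) * r2 y l) g := fun k' =>
    kik_integrable e g hsq_e hsq_g _ _ hK1c (hK2fc k') _ hC
  -- pointwise expansion of the inner integrand
  have hpt : ∀ y x : Fin m → ℝ,
      (kprod (r1 y) e * kprod (r1 x) e) * (C y * B x) * (kprod (r2 y) g * kprod (r2 x) g) =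
      ∑ j' : Fin d1 → Fin 2, ∑ k' : Fin d2 → Fin 2,
        (kprod (r1 y) e * cIter (List.ofFn fun l => (e l, j' l))
          (C y * kprod (fun l => (-1 : ℝ) ^ ((k' l : ℕ)) * r2 y l) g)) *
        (kprod (fun l => (-1 : ℝ) ^ ((j' l : ℕ)) * r1 x l) e *
          cIter (List.ofFn fun l => (g l, k' l)) (B x) * kprod (r2 x) g) := by
    intro y x
    rw [Finset.sum_comm]
    -- decompose B x
    conv_lhs => rw [← cIter_sum g (B x)]
    simp only [Finset.mul_sum, Finset.sum_mul]
    refine Finset.sum_congr rfl fun k' _ => ?_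
    -- move the y-kernel of the second list through the B-part
    have hmove2 : kprod (fun l => (-1 : ℝ) ^ ((k' l : ℕ)) * r2 y l) g *
        cIter (List.ofFn fun l => (g l, k' l)) (B x) =
        cIter (List.ofFn fun l => (g l, k' l)) (B x) * kprod (r2 y) g :=
      kprod_flip_semiconj (r2 y) g k' _ (cIter_ofFn_semiconj g k' hsq_g hcomm_g (B x))
    rw [shuffle1 hmove2]
    -- decompose C y * K2f
    conv_lhs => rw [← cIter_sum e (C y *
      kprod (fun l => (-1 : ℝ) ^ ((k' l : ℕ)) * r2 y l) g)]
    simp only [Finset.mul_sum, Finset.sum_mul]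
    refine Finset.sum_congr rfl fun j' _ => ?_
    have hmove1 : kprod (r1 x) e * cIter (List.ofFn fun l => (e l, j' l))
        (C y * kprod (fun l => (-1 : ℝ) ^ ((k' l : ℕ)) * r2 y l) g) =
        cIter (List.ofFn fun l => (e l, j' l))
          (C y * kprod (fun l => (-1 : ℝ) ^ ((k' l : ℕ)) * r2 y l) g) *
          kprod (fun l => (-1 : ℝ) ^ ((j' l : ℕ)) * r1 x l) e :=
      kprod_semiconj (r1 x) e j' _ (cIter_ofFn_semiconj e j' hsq_e hcomm_e _)
    rw [shuffle2 hmove1]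
  -- integrate in x
  have hinner : ∀ y : Fin m → ℝ,
      (∫ x : Fin m → ℝ, (kprod (r1 y) e * kprod (r1 x) e) * (C y * B x) *
        (kprod (r2 y) g * kprod (r2 x) g)) =
      ∑ j' : Fin d1 → Fin 2, ∑ k' : Fin d2 → Fin 2,
        (kprod (r1 y) e * cIter (List.ofFn fun l => (e l, j' l))
          (C y * kprod (fun l => (-1 : ℝ) ^ ((k' l : ℕ)) * r2 y l) g)) *
        (∫ x : Fin m → ℝ, kprod (fun l => (-1 : ℝ) ^ ((j' l : ℕ)) * r1 x l) e *
          cIter (List.ofFn fun l => (g l, k' l)) (B x) * kprod (r2 x) g) := by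
    intro y
    simp only [hpt y]
    rw [integral_finset_sum _ (fun j' _ =>
      integrable_finset_sum _ fun k' _ => (hT2 j' k').const_mul _)]
    refine Finset.sum_congr rfl fun j' _ => ?_
    rw [integral_finset_sum _ (fun k' _ => (hT2 j' k').const_mul _)]
    refine Finset.sum_congr rfl fun k' _ => ?_
    have := ContinuousLinearMap.integral_comp_comm
      (ContinuousLinearMap.mul ℝ 𝔸 (kprod (r1 y) e * cIter (List.ofFn fun l => (e l, j' l))
        (C y * kprod (fun l => (-1 : ℝ) ^ ((k' l : ℕ)) * r2 y l) g))) (hT2 j' k')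
    simpa only [ContinuousLinearMap.mul_apply'] using this
  rw [integral_congr_ae (Filter.Eventually.of_forall hinner)]
  -- integrate in y
  rw [integral_finset_sum _ (fun j' _ =>
    integrable_finset_sum _ fun k' _ => (hT1 j' k').mul_const _)]
  refine Finset.sum_congr rfl fun j' _ => ?_
  rw [integral_finset_sum _ (fun k' _ => (hT1 j' k').mul_const _)]
  refine Finset.sum_congr rfl fun k' _ => ?_
  have hpull := ContinuousLinearMap.integral_comp_comm
    ((ContinuousLinearMap.mul ℝ 𝔸).flip
      (∫ x : Fin m → ℝ, kprod (fun l => (-1 : ℝ) ^ ((j' l : ℕ)) * r1 x l) e *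
        cIter (List.ofFn fun l => (g l, k' l)) (B x) * kprod (r2 x) g)) (hT1 j' k')
  simp only [ContinuousLinearMap.flip_apply, ContinuousLinearMap.mul_apply'] at hpull
  rw [hpull]
  congr 1
  -- identify the C-side factor
  have hKe : ∀ (y : Fin m → ℝ) (l : Fin d1), kprod (r1 y) e * e l = e l * kprod (r1 y) e :=
    fun y l => (kprod_commute (r1 y) e hcomm_e l).symm
  have hstep : ∀ y : Fin m → ℝ,
      kprod (r1 y) e * cIter (List.ofFn fun l => (e l, j' l))
        (C y * kprod (fun l => (-1 : ℝ) ^ ((k' l : ℕ)) * r2 y l) g) =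
      cIterCLM (List.ofFn fun l => (e l, j' l))
        (kprod (r1 y) e * C y * kprod (fun l => (-1 : ℝ) ^ ((k' l : ℕ)) * r2 y l) g) := by
    intro y
    rw [cIterCLM_apply, mul_assoc,
      cIter_ofFn_mul_left e j' hsq_e (hKe y) _]
  rw [integral_congr_ae (Filter.Eventually.of_forall hstep)]
  rw [ContinuousLinearMap.integral_comp_comm _ (hCK k'), cIterCLM_apply]

lemma core2 (e : Fin d1 → 𝔸) (g : Fin d2 → 𝔸)
    (r1 : (Fin m → ℝ) → Fin d1 → ℝ) (r2 : (Fin m → ℝ) → Fin d2 → ℝ)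
    (hsq_e : ∀ l, e l ^ 2 = -1) (hsq_g : ∀ l, g l ^ 2 = -1)
    (hcomm_e : ∀ l k, e l * e k = e k * e l) (hcomm_g : ∀ l k, g l * g k = g k * g l)
    (hr1 : ∀ l, IsLinearMap ℝ (fun x => r1 x l)) (hr2 : ∀ l, IsLinearMap ℝ (fun x => r2 x l))
    (C B : (Fin m → ℝ) → 𝔸) (hC : Integrable C) (hB : Integrable B) :
    (∫ y : Fin m → ℝ, ∫ x : Fin m → ℝ,
        (kprod (r1 y) e * kprod (r1 x) e) * (C y * B x) * (kprod (r2 y) g * kprod (r2 x) g)) =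
      ∑ j' : Fin d1 → Fin 2, ∑ k' : Fin d2 → Fin 2,
        (∫ y : Fin m → ℝ, kprod (r1 y) e * cIter (List.ofFn fun l => (e l, j' l)) (C y) *
          kprod (fun l => (-1 : ℝ) ^ ((k' l : ℕ)) * r2 y l) g) *
        cIter (List.ofFn fun l => (g l, k' l))
          (∫ x : Fin m → ℝ, kprod (fun l => (-1 : ℝ) ^ ((j' l : ℕ)) * r1 x l) e * B x *
            kprod (r2 x) g) := by
  classical
  have hK1c : Continuous fun x => kprod (r1 x) e := kprod_cont e r1 hr1
  have hK2c : Continuous fun x => kprod (r2 x) g := kprod_cont g r2 hr2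
  have hK1fc : ∀ j' : Fin d1 → Fin 2,
      Continuous fun x => kprod (fun l => (-1 : ℝ) ^ ((j' l : ℕ)) * r1 x l) e := fun j' =>
    kprod_cont e _ (lin_mul_const r1 hr1 _)
  have hK2fc : ∀ k' : Fin d2 → Fin 2,
      Continuous fun x => kprod (fun l => (-1 : ℝ) ^ ((k' l : ℕ)) * r2 x l) g := fun k' =>
    kprod_cont g _ (lin_mul_const r2 hr2 _)
  have hCk : ∀ j' : Fin d1 → Fin 2,
      Integrable fun y => cIter (List.ofFn fun l => (e l, j' l)) (C y) := by
    intro j'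
    have := (cIterCLM (List.ofFn fun l => (e l, j' l))).integrable_comp hC
    simpa only [cIterCLM_apply] using this
  have hS1 : ∀ (j' : Fin d1 → Fin 2) (k' : Fin d2 → Fin 2),
      Integrable fun y => kprod (r1 y) e * cIter (List.ofFn fun l => (e l, j' l)) (C y) *
        kprod (fun l => (-1 : ℝ) ^ ((k' l : ℕ)) * r2 y l) g := fun j' k' =>
    kik_integrable e g hsq_e hsq_g _ _ hK1c (hK2fc k') _ (hCk j')
  have hKB : ∀ j' : Fin d1 → Fin 2,
      Integrable fun x => kprod (fun l => (-1 : ℝ) ^ ((j' l : ℕ)) * r1 x l) e * B x := by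
    intro j'
    apply Integrable.bdd_mul (c := ‖(1 : 𝔸)‖ * ∏ l, (‖(1 : 𝔸)‖ + ‖e l‖)) hB
      (hK1fc j').aestronglyMeasurable
    exact Filter.Eventually.of_forall fun x => kprod_norm_le _ _ hsq_e
  have hTk : ∀ (j' : Fin d1 → Fin 2) (k' : Fin d2 → Fin 2),
      Integrable fun x => cIter (List.ofFn fun l => (g l, k' l))
        (kprod (fun l => (-1 : ℝ) ^ ((j' l : ℕ)) * r1 x l) e * B x) := by
    intro j' k'
    have := (cIterCLM (List.ofFn fun l => (g l, k' l))).integrable_comp (hKB j')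
    simpa only [cIterCLM_apply] using this
  have hS2 : ∀ (j' : Fin d1 → Fin 2) (k' : Fin d2 → Fin 2),
      Integrable fun x => cIter (List.ofFn fun l => (g l, k' l))
        (kprod (fun l => (-1 : ℝ) ^ ((j' l : ℕ)) * r1 x l) e * B x) * kprod (r2 x) g := by
    intro j' k'
    apply (hTk j' k').mul_bdd'' (c := ‖(1 : 𝔸)‖ * ∏ l, (‖(1 : 𝔸)‖ + ‖g l‖))
      hK2c.aestronglyMeasurable
    exact Filter.Eventually.of_forall fun x => kprod_norm_le _ _ hsq_g
  have hBK : ∀ j' : Fin d1 → Fin 2,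
      Integrable fun x => kprod (fun l => (-1 : ℝ) ^ ((j' l : ℕ)) * r1 x l) e * B x *
        kprod (r2 x) g := fun j' =>
    kik_integrable e g hsq_e hsq_g _ _ (hK1fc j') hK2c _ hB
  -- pointwise expansion
  have hpt : ∀ y x : Fin m → ℝ,
      (kprod (r1 y) e * kprod (r1 x) e) * (C y * B x) * (kprod (r2 y) g * kprod (r2 x) g) =
      ∑ j' : Fin d1 → Fin 2, ∑ k' : Fin d2 → Fin 2,
        ((kprod (r1 y) e * cIter (List.ofFn fun l => (e l, j' l)) (C y)) *
          kprod (fun l => (-1 : ℝ) ^ ((k' l : ℕ)) * r2 y l) g) *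
        (cIter (List.ofFn fun l => (g l, k' l))
          (kprod (fun l => (-1 : ℝ) ^ ((j' l : ℕ)) * r1 x l) e * B x) * kprod (r2 x) g) := by
    intro y x
    conv_lhs => rw [← cIter_sum e (C y)]
    simp only [Finset.mul_sum, Finset.sum_mul]
    refine Finset.sum_congr rfl fun j' _ => ?_
    have hmove1 : kprod (r1 x) e * cIter (List.ofFn fun l => (e l, j' l)) (C y) =
        cIter (List.ofFn fun l => (e l, j' l)) (C y) *
          kprod (fun l => (-1 : ℝ) ^ ((j' l : ℕ)) * r1 x l) e :=
      kprod_semiconj (r1 x) e j' _ (cIter_ofFn_semiconj e j' hsq_e hcomm_e _)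
    rw [shuffle3 hmove1]
    conv_lhs => rw [← cIter_sum g
      (kprod (fun l => (-1 : ℝ) ^ ((j' l : ℕ)) * r1 x l) e * B x)]
    simp only [Finset.mul_sum, Finset.sum_mul]
    refine Finset.sum_congr rfl fun k' _ => ?_
    have hmove2 : kprod (fun l => (-1 : ℝ) ^ ((k' l : ℕ)) * r2 y l) g *
        cIter (List.ofFn fun l => (g l, k' l))
          (kprod (fun l => (-1 : ℝ) ^ ((j' l : ℕ)) * r1 x l) e * B x) =
        cIter (List.ofFn fun l => (g l, k' l))
          (kprod (fun l => (-1 : ℝ) ^ ((j' l : ℕ)) * r1 x l) e * B x) * kprod (r2 y) g :=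
      kprod_flip_semiconj (r2 y) g k' _ (cIter_ofFn_semiconj g k' hsq_g hcomm_g _)
    rw [shuffle4 hmove2]
  -- integrate in x
  have hinner : ∀ y : Fin m → ℝ,
      (∫ x : Fin m → ℝ, (kprod (r1 y) e * kprod (r1 x) e) * (C y * B x) *
        (kprod (r2 y) g * kprod (r2 x) g)) =
      ∑ j' : Fin d1 → Fin 2, ∑ k' : Fin d2 → Fin 2,
        ((kprod (r1 y) e * cIter (List.ofFn fun l => (e l, j' l)) (C y)) *
          kprod (fun l => (-1 : ℝ) ^ ((k' l : ℕ)) * r2 y l) g) *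
        (∫ x : Fin m → ℝ, cIter (List.ofFn fun l => (g l, k' l))
          (kprod (fun l => (-1 : ℝ) ^ ((j' l : ℕ)) * r1 x l) e * B x) * kprod (r2 x) g) := by
    intro y
    simp only [hpt y]
    rw [integral_finset_sum _ (fun j' _ =>
      integrable_finset_sum _ fun k' _ => (hS2 j' k').const_mul _)]
    refine Finset.sum_congr rfl fun j' _ => ?_
    rw [integral_finset_sum _ (fun k' _ => (hS2 j' k').const_mul _)]
    refine Finset.sum_congr rfl fun k' _ => ?_
    have := ContinuousLinearMap.integral_comp_comm
      (ContinuousLinearMap.mul ℝ 𝔸 ((kprod (r1 y) e *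
        cIter (List.ofFn fun l => (e l, j' l)) (C y)) *
        kprod (fun l => (-1 : ℝ) ^ ((k' l : ℕ)) * r2 y l) g)) (hS2 j' k')
    simpa only [ContinuousLinearMap.mul_apply'] using this
  rw [integral_congr_ae (Filter.Eventually.of_forall hinner)]
  -- integrate in y
  rw [integral_finset_sum _ (fun j' _ =>
    integrable_finset_sum _ fun k' _ => (hS1 j' k').mul_const _)]
  refine Finset.sum_congr rfl fun j' _ => ?_
  rw [integral_finset_sum _ (fun k' _ => (hS1 j' k').mul_const _)]
  refine Finset.sum_congr rfl fun k' _ => ?_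
  have hpull := ContinuousLinearMap.integral_comp_comm
    ((ContinuousLinearMap.mul ℝ 𝔸).flip
      (∫ x : Fin m → ℝ, cIter (List.ofFn fun l => (g l, k' l))
        (kprod (fun l => (-1 : ℝ) ^ ((j' l : ℕ)) * r1 x l) e * B x) * kprod (r2 x) g))
    (hS1 j' k')
  simp only [ContinuousLinearMap.flip_apply, ContinuousLinearMap.mul_apply'] at hpull
  rw [hpull]
  congr 1
  -- identify the B-side factor
  have hKg : ∀ (x : Fin m → ℝ) (l : Fin d2), kprod (r2 x) g * g l = g l * kprod (r2 x) g :=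
    fun x l => (kprod_commute (r2 x) g hcomm_g l).symm
  have hstep : ∀ x : Fin m → ℝ,
      cIter (List.ofFn fun l => (g l, k' l))
        (kprod (fun l => (-1 : ℝ) ^ ((j' l : ℕ)) * r1 x l) e * B x) * kprod (r2 x) g =
      cIterCLM (List.ofFn fun l => (g l, k' l))
        (kprod (fun l => (-1 : ℝ) ^ ((j' l : ℕ)) * r1 x l) e * B x * kprod (r2 x) g) := by
    intro x
    rw [cIterCLM_apply, cIter_ofFn_mul_right g k' hsq_g (hKg x) _]
  rw [integral_congr_ae (Filter.Eventually.of_forall hstep)]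
  rw [ContinuousLinearMap.integral_comp_comm _ (hBK j'), cIterCLM_apply]

end Main

/-- Convolution theorem for a GFT whose directions commute pointwise within each of the two
kernel lists (cross commutativity between the lists is not required). -/
theorem gft_convolution_commutative {m μ ν' : ℕ}
    (ρ1 : Fin μ → (Fin m → ℝ) → (Fin m → ℝ) → ℝ) (i1 : Fin μ → (Fin m → ℝ) → 𝔸)
    (ρ2 : Fin ν' → (Fin m → ℝ) → (Fin m → ℝ) → ℝ) (i2 : Fin ν' → (Fin m → ℝ) → 𝔸)
    (hi1 : ∀ l u, i1 l u ^ 2 = -1) (hi2 : ∀ l u, i2 l u ^ 2 = -1)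
    (hlin1 : ∀ l u, IsLinearMap ℝ (fun x => ρ1 l x u))
    (hlin2 : ∀ l u, IsLinearMap ℝ (fun x => ρ2 l x u))
    (hcomm1 : ∀ u l k, i1 l u * i1 k u = i1 k u * i1 l u)
    (hcomm2 : ∀ u l k, i2 l u * i2 k u = i2 k u * i2 l u)
    (C B : (Fin m → ℝ) → 𝔸) (hC : Integrable C) (hB : Integrable B)
    (A : (Fin m → ℝ) → 𝔸) (hA : ∀ x, A x = ∫ y : Fin m → ℝ, C y * B (x - y))
    (u : Fin m → ℝ) :
    gft ρ1 i1 ρ2 i2 A u =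
      (∑ j' : Fin μ → Fin 2, ∑ k' : Fin ν' → Fin 2,
        cIter (List.ofFn (fun l => (i1 l u, j' l)))
            (gft ρ1 i1
              (fun l x w => (-1 : ℝ) ^ ((k' l : ℕ)) * ρ2 l x w) i2 C u) *
          gft (fun l x w => (-1 : ℝ) ^ ((j' l : ℕ)) * ρ1 l x w) i1 ρ2 i2
            (fun z => cIter (List.ofFn (fun l => (i2 l u, k' l))) (B z)) u) ∧
    gft ρ1 i1 ρ2 i2 A u =
      (∑ j' : Fin μ → Fin 2, ∑ k' : Fin ν' → Fin 2,
        gft ρ1 i1 (fun l x w => (-1 : ℝ) ^ ((k' l : ℕ)) * ρ2 l x w) i2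
            (fun z => cIter (List.ofFn (fun l => (i1 l u, j' l))) (C z)) u *
          cIter (List.ofFn (fun l => (i2 l u, k' l)))
            (gft (fun l x w => (-1 : ℝ) ^ ((j' l : ℕ)) * ρ1 l x w) i1 ρ2 i2 B u)) := by
  have h0 : gft ρ1 i1 ρ2 i2 A u =
      ∫ x : Fin m → ℝ, kprod (fun l => ρ1 l x u) (fun l => i1 l u) *
        (∫ y : Fin m → ℝ, C y * B (x - y)) * kprod (fun l => ρ2 l x u) (fun l => i2 l u) := by
    show (∫ x : Fin m → ℝ, kprod (fun l => ρ1 l x u) (fun l => i1 l u) * A x *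
        kprod (fun l => ρ2 l x u) (fun l => i2 l u)) = _
    exact integral_congr_ae (Filter.Eventually.of_forall fun x => by simp only; rw [hA x])
  have hkey := key_eq (fun l => i1 l u) (fun l => i2 l u)
    (fun x l => ρ1 l x u) (fun x l => ρ2 l x u)
    (fun l => hi1 l u) (fun l => hi2 l u)
    (fun l k => hcomm1 u l k) (fun l k => hcomm2 u l k)
    (fun l => hlin1 l u) (fun l => hlin2 l u) C B hC hB
  constructor
  · rw [h0, hkey, core1 (fun l => i1 l u) (fun l => i2 l u)
      (fun x l => ρ1 l x u) (fun x l => ρ2 l x u)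
      (fun l => hi1 l u) (fun l => hi2 l u)
      (fun l k => hcomm1 u l k) (fun l k => hcomm2 u l k)
      (fun l => hlin1 l u) (fun l => hlin2 l u) C B hC hB]
    rfl
  · rw [h0, hkey, core2 (fun l => i1 l u) (fun l => i2 l u)
      (fun x l => ρ1 l x u) (fun x l => ρ2 l x u)
      (fun l => hi1 l u) (fun l => hi2 l u)
      (fun l k => hcomm1 u l k) (fun l k => hcomm2 u l k)
      (fun l => hlin1 l u) (fun l => hlin2 l u) C B hC hB]
    rfl
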